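/- Let v ∈ ℝ^n \ {0}, a₀ ∈ ℝ^n, and let (γ_k) be a sequence of strictly positive real numbers with γ_k → ∞; set a_k = a₀ + γ_k v. If (Q_k) is any sequence in 𝓜 such that Q_k attains the supremum at −a_k for every k, then lim_{k→∞} ∫ (v·B) dQ_k = sup_{Q ∈ 𝓜} ∫ (v·B) dQ. -/

import Mathlib

open MeasureTheory Filter Topology

lemma aux_integrable {Ω : Type*} [MeasurableSpace Ω]
    {n : ℕ} {B : Fin n → Ω → ℝ} (hBmeas : ∀ j, Measurable (B j))
    {C : ℝ} (hBbdd : ∀ j ω, |B j ω| ≤ C)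
    (c : Fin n → ℝ) (Q : Measure Ω) [IsFiniteMeasure Q] :
    Integrable (fun ω => ∑ j, c j * B j ω) Q := by
  have hm : Measurable fun ω => ∑ j, c j * B j ω :=
    Finset.measurable_sum _ (fun j _ => (hBmeas j).const_mul _)
  refine ⟨hm.aestronglyMeasurable, ?_⟩
  apply MeasureTheory.HasFiniteIntegral.of_bounded (C := ∑ j, |c j| * C)
  filter_upwards with ω
  calc ‖∑ j, c j * B j ω‖ ≤ ∑ j, ‖c j * B j ω‖ := norm_sum_le _ _
    _ ≤ ∑ j, |c j| * C := by
        refine Finset.sum_le_sum fun j _ => ?_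
        rw [norm_mul]
        exact mul_le_mul_of_nonneg_left (hBbdd j ω) (abs_nonneg _)

lemma aux_bound {Ω : Type*} [MeasurableSpace Ω]
    {n : ℕ} {B : Fin n → Ω → ℝ}
    {C : ℝ} (hBbdd : ∀ j ω, |B j ω| ≤ C)
    (c : Fin n → ℝ) (Q : Measure Ω) [IsProbabilityMeasure Q] :
    |∫ ω, ∑ j, c j * B j ω ∂Q| ≤ ∑ j, |c j| * C := by
  have := MeasureTheory.norm_integral_le_of_norm_le_const
    (μ := Q) (C := ∑ j, |c j| * C) (f := fun ω => ∑ j, c j * B j ω) ?_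
  · simpa using this
  · filter_upwards with ω
    calc ‖∑ j, c j * B j ω‖ ≤ ∑ j, ‖c j * B j ω‖ := norm_sum_le _ _
      _ ≤ ∑ j, |c j| * C := by
          refine Finset.sum_le_sum fun j _ => ?_
          rw [norm_mul]
          exact mul_le_mul_of_nonneg_left (hBbdd j ω) (abs_nonneg _)

theorem stmt1
    {Ω : Type*} [MeasurableSpace Ω] (P : Measure Ω) [IsProbabilityMeasure P]
    {n : ℕ} (B : Fin n → Ω → ℝ)
    (hBmeas : ∀ j, Measurable (B j))
    (C : ℝ) (hBbdd : ∀ j ω, |B j ω| ≤ C)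
    (M : Set (Measure Ω)) (hMne : M.Nonempty)
    (hMprob : ∀ Q ∈ M, IsProbabilityMeasure Q)
    (hMac : ∀ Q ∈ M, Q ≪ P)
    (α : Measure Ω → ℝ) (hα : ∀ Q ∈ M, 0 ≤ α Q)
    (r : (Fin n → ℝ) → ℝ)
    (hr : ∀ a : Fin n → ℝ,
      r a = sSup {x | ∃ Q ∈ M, x = ∫ ω, -(∑ j, a j * B j ω) ∂Q - α Q})
    (v : Fin n → ℝ) (hv : v ≠ 0) (a₀ : Fin n → ℝ)
    (γ : ℕ → ℝ) (hγpos : ∀ k, 0 < γ k) (hγ : Tendsto γ atTop atTop)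
    (Q : ℕ → Measure Ω) (hQmem : ∀ k, Q k ∈ M)
    (hQattain : ∀ k,
      r (-(a₀ + γ k • v)) =
        ∫ ω, -(∑ j, (-(a₀ + γ k • v)) j * B j ω) ∂(Q k) - α (Q k)) :
    Tendsto (fun k => ∫ ω, (∑ j, v j * B j ω) ∂(Q k)) atTop
      (𝓝 (sSup {x | ∃ Q' ∈ M, x = ∫ ω, (∑ j, v j * B j ω) ∂Q'})) := by
  -- notation
  set f : Measure Ω → ℝ := fun Q' => ∫ ω, ∑ j, v j * B j ω ∂Q' with hf
  set g : Measure Ω → ℝ := fun Q' => ∫ ω, ∑ j, a₀ j * B j ω ∂Q' with hg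
  set K : ℝ := ∑ j, |v j| * C with hK
  set K' : ℝ := ∑ j, |a₀ j| * C with hK'
  have hfbd : ∀ Q' ∈ M, |f Q'| ≤ K := fun Q' hQ' => by
    haveI := hMprob Q' hQ'; exact aux_bound hBbdd v Q'
  have hgbd : ∀ Q' ∈ M, |g Q'| ≤ K' := fun Q' hQ' => by
    haveI := hMprob Q' hQ'; exact aux_bound hBbdd a₀ Q'
  set S : ℝ := sSup {x | ∃ Q' ∈ M, x = f Q'} with hS
  have hSne : {x | ∃ Q' ∈ M, x = f Q'}.Nonempty := by
    obtain ⟨Q', hQ'⟩ := hMne; exact ⟨f Q', Q', hQ', rfl⟩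
  have hSbdd : BddAbove {x | ∃ Q' ∈ M, x = f Q'} := by
    refine ⟨K, fun x hx => ?_⟩
    obtain ⟨Q', hQ', rfl⟩ := hx
    exact (abs_le.mp (hfbd Q' hQ')).2
  have hfS : ∀ Q' ∈ M, f Q' ≤ S := fun Q' hQ' => le_csSup hSbdd ⟨Q', hQ', rfl⟩
  -- the attainment value in terms of f, g
  have hint : ∀ k, ∀ Q' ∈ M,
      ∫ ω, -(∑ j, (-(a₀ + γ k • v)) j * B j ω) ∂Q' = g Q' + γ k * f Q' := by
    intro k Q' hQ'
    haveI := hMprob Q' hQ'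
    have hpt : ∀ ω, -(∑ j, (-(a₀ + γ k • v)) j * B j ω)
        = (∑ j, a₀ j * B j ω) + γ k * ∑ j, v j * B j ω := by
      intro ω
      rw [Finset.mul_sum, ← Finset.sum_add_distrib, ← Finset.sum_neg_distrib]
      refine Finset.sum_congr rfl fun j _ => ?_
      simp [Pi.add_apply, Pi.smul_apply]
      ring
    simp_rw [hpt]
    rw [integral_add (aux_integrable hBmeas hBbdd a₀ Q')
      (((aux_integrable hBmeas hBbdd v Q')).const_mul _),
      integral_const_mul]
  -- key inequality: for all k and Q' ∈ M
  have hkey : ∀ k, ∀ Q' ∈ M,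
      g Q' + γ k * f Q' - α Q' ≤ g (Q k) + γ k * f (Q k) - α (Q k) := by
    intro k Q' hQ'
    have hbdd : BddAbove {x | ∃ Q'' ∈ M, x =
        ∫ ω, -(∑ j, (-(a₀ + γ k • v)) j * B j ω) ∂Q'' - α Q''} := by
      refine ⟨K' + γ k * K, fun x hx => ?_⟩
      obtain ⟨Q'', hQ'', rfl⟩ := hx
      rw [hint k Q'' hQ'']
      have h1 := (abs_le.mp (hgbd Q'' hQ'')).2
      have h2 := (abs_le.mp (hfbd Q'' hQ'')).2
      have := hα Q'' hQ''
      nlinarith [(hγpos k).le]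
    have hle : g Q' + γ k * f Q' - α Q' ≤ r (-(a₀ + γ k • v)) := by
      rw [hr]
      refine le_csSup hbdd ⟨Q', hQ', ?_⟩
      rw [hint k Q' hQ']
    calc g Q' + γ k * f Q' - α Q' ≤ r (-(a₀ + γ k • v)) := hle
      _ = g (Q k) + γ k * f (Q k) - α (Q k) := by
          rw [hQattain k, hint k (Q k) (hQmem k)]
  -- squeeze
  rw [Metric.tendsto_atTop]
  intro ε hε
  obtain ⟨x, ⟨Q', hQ', rfl⟩, hx⟩ := exists_lt_of_lt_csSup hSne
    (show S - ε/2 < S by linarith)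
  have hdiv : Tendsto (fun k => (α Q' + 2 * K') / γ k) atTop (𝓝 0) :=
    tendsto_const_nhds.div_atTop hγ
  have hev : ∀ᶠ k in atTop, (α Q' + 2 * K') / γ k < ε/2 :=
    (hdiv.eventually (eventually_lt_nhds (by linarith : (0:ℝ) < ε/2)))
  obtain ⟨N, hN⟩ := hev.exists_forall_of_atTop
  refine ⟨N, fun k hk => ?_⟩
  have hlow : f Q' - (α Q' + 2 * K') / γ k ≤ f (Q k) := by
    have h := hkey k Q' hQ'
    have hg1 := abs_le.mp (hgbd Q' hQ')
    have hg2 := abs_le.mp (hgbd (Q k) (hQmem k))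
    have hαk := hα (Q k) (hQmem k)
    have hγk := hγpos k
    have h3 : γ k * (f Q' - (α Q' + 2 * K') / γ k) ≤ γ k * f (Q k) := by
      rw [mul_sub, mul_div_cancel₀ _ hγk.ne']
      nlinarith
    exact le_of_mul_le_mul_left h3 hγk
  have hup : f (Q k) ≤ S := hfS (Q k) (hQmem k)
  rw [Real.dist_eq, abs_sub_lt_iff]
  constructor
  · linarith
  · have := hN k hk
    have := hx
    linarith
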